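/- Fix q ∈ (-1,1) and x with |x| < 2/√(1-q). For any 0 ≤ t₁ < t₂ and y₁, y₂ ∈ ℝ, with δ = t₂ - t₁, the rescaled q-Ornstein–Uhlenbeck transition density satisfies lim_{ε↓0} ε · p_{εt₁, εt₂}(x + y₁ε, x + y₂ε) = δ √(1-q) √(4-(1-q)x²) / (π [(1-q)(y₂-y₁)² + δ²(4-(1-q)x²)]). Equivalently, this limit equals the Cauchy transition density f⁽¹⁾_{t₁,t₂}(y₁/c, y₂/c)/c with c = √(4/(1-q) - x²). -/

import Mathlib

/-- φ_{q,k}(δ,x,y) from the q-Ornstein–Uhlenbeck transition density. -/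
noncomputable def phiQ (q : ℝ) (k : ℕ) (δ x y : ℝ) : ℝ :=
  (1 - Real.exp (-2*δ) * q^(2*k))^2
    - (1-q) * Real.exp (-δ) * q^k * (1 + Real.exp (-2*δ) * q^(2*k)) * x * y
    + (1-q) * Real.exp (-2*δ) * q^(2*k) * (x^2 + y^2)

/-- The q-normal marginal density p(y). -/
noncomputable def pMarg (q y : ℝ) : ℝ :=
  Real.sqrt (1-q) * (∏' k : ℕ, (1 - q^(k+1))) / (2*Real.pi)
    * Real.sqrt (4 - (1-q)*y^2)
    * ∏' k : ℕ, ((1 + q^(k+1))^2 - (1-q)*y^2*q^(k+1))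

/-- Transition density p_{s,t}(x,y) of the q-Ornstein–Uhlenbeck process. -/
noncomputable def pOU (q s t x y : ℝ) : ℝ :=
  (∏' k : ℕ, (1 - Real.exp (-2*(t-s)) * q^k)) * (∏' k : ℕ, 1 / phiQ q k (t-s) x y)
    * pMarg q y

/-- Cauchy process transition density f⁽¹⁾_{t₁,t₂}(u,v). -/
noncomputable def fCauchy (t₁ t₂ u v : ℝ) : ℝ :=
  (1/Real.pi) * ((t₂ - t₁) / ((v - u)^2 + (t₂ - t₁)^2))

open Real Filter Topology

/-! ### Auxiliary lemmas -/

lemma abs_log_one_sub_le_two_mul {u : ℝ} (h : |u| ≤ 1/2) : |Real.log (1-u)| ≤ 2*|u| := by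
  have h1 : (1:ℝ)/2 ≤ 1 - u := by
    have := abs_le.mp h; linarith [this.2]
  have h0 : (0:ℝ) < 1 - u := by linarith
  rw [abs_le]
  constructor
  · have h2 : Real.log (1/(1-u)) ≤ 1/(1-u) - 1 := Real.log_le_sub_one_of_pos (by positivity)
    rw [Real.log_div one_ne_zero (ne_of_gt h0), Real.log_one] at h2
    have h3 : 1/(1-u) - 1 = u/(1-u) := by field_simp; ring
    have h4 : u/(1-u) ≤ 2*|u| := by
      rw [div_le_iff₀ h0]
      have := le_abs_self u
      nlinarith [abs_nonneg u, abs_le.mp h]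
    linarith
  · have h2 : Real.log (1-u) ≤ (1-u) - 1 := Real.log_le_sub_one_of_pos h0
    have := neg_abs_le u
    have := abs_nonneg u
    linarith

noncomputable def boundFn (r : ℝ) (N : ℕ) (k : ℕ) : ℝ :=
  (if k < N then max 19 (-Real.log ((1-r)^4)) else 0) + 38 * r^(k+1)

lemma summable_boundFn {r : ℝ} (hr0 : 0 ≤ r) (hr1 : r < 1) (N : ℕ) :
    Summable (boundFn r N) := by
  apply Summable.add
  · apply summable_of_ne_finset_zero (s := Finset.range N)
    intro k hk
    simp only [Finset.mem_range] at hk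
    simp [hk]
  · apply Summable.mul_left
    exact (summable_geometric_of_lt_one hr0 hr1).comp_injective (add_left_injective 1)

lemma key_bound {r : ℝ} (hr0 : 0 ≤ r) (hr1 : r < 1) {N : ℕ} (hN : 19 * r^(N+1) ≤ 1/2)
    {u : ℝ} {k : ℕ} (hm : (1-r)^4 ≤ 1 - u) (hu : |u| ≤ 19 * r^(k+1)) :
    |Real.log (1-u)| ≤ boundFn r N k := by
  have hrp : (0:ℝ) < (1-r)^4 := pow_pos (by linarith) 4
  have h0 : (0:ℝ) < 1 - u := lt_of_lt_of_le hrp hm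
  by_cases hk : k < N
  · simp only [boundFn, if_pos hk]
    have hb1 : Real.log (1-u) ≤ 19 := by
      have h2 : Real.log (1-u) ≤ (1-u) - 1 := Real.log_le_sub_one_of_pos h0
      have : -u ≤ |u| := neg_le_abs u
      have hrk : r^(k+1) ≤ 1 := pow_le_one₀ hr0 hr1.le
      nlinarith
    have hb2 : -Real.log (1-u) ≤ -Real.log ((1-r)^4) :=
      neg_le_neg (Real.log_le_log hrp hm)
    have : |Real.log (1-u)| ≤ max 19 (-Real.log ((1-r)^4)) := by
      rw [abs_le]
      constructor
      · linarith [le_max_right (19:ℝ) (-Real.log ((1-r)^4))]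
      · linarith [le_max_left (19:ℝ) (-Real.log ((1-r)^4))]
    have : (0:ℝ) ≤ 38 * r^(k+1) := by positivity
    linarith
  · simp only [boundFn, if_neg hk, zero_add]
    push_neg at hk
    have hpow : r^(k+1) ≤ r^(N+1) :=
      pow_le_pow_of_le_one hr0 hr1.le (by omega)
    have hu2 : |u| ≤ 1/2 := le_trans hu (by nlinarith)
    have := abs_log_one_sub_le_two_mul hu2
    linarith

noncomputable def phiA (q a x y : ℝ) : ℝ :=
  (1-a^2)^2 - (1-q)*a*(1+a^2)*x*y + (1-q)*a^2*(x^2+y^2)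

lemma phiQ_eq_phiA (q : ℝ) (k : ℕ) (d x y : ℝ) :
    phiQ q k d x y = phiA q (Real.exp (-d) * q^k) x y := by
  unfold phiQ phiA
  have h1 : Real.exp (-2*d) = Real.exp (-d) * Real.exp (-d) := by
    rw [← Real.exp_add]; ring_nf
  have h2 : q^(2*k) = q^k * q^k := by rw [two_mul, pow_add]
  rw [h1, h2]; ring

lemma quadA_lower {ρ a c : ℝ} (haρ : |a| ≤ ρ) (hρ : ρ < 1) (hc : |c| ≤ 1) :
    (1-ρ)^2 ≤ 1 - 2*a*c + a^2 := by
  have h1 : a*c ≤ |a| := by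
    calc a*c ≤ |a*c| := le_abs_self _
    _ = |a| * |c| := abs_mul a c
    _ ≤ |a| * 1 := by nlinarith [abs_nonneg a]
    _ = |a| := mul_one _
  nlinarith [sq_abs a, abs_nonneg a]

set_option maxHeartbeats 1000000 in
lemma phiA_lower' {a ρ u v p w : ℝ} (haρ : |a| ≤ ρ) (hρ : ρ < 1)
    (hu : 0 ≤ u) (hu4 : u ≤ 4) (hv : 0 ≤ v) (hv4 : v ≤ 4)
    (hp2 : p^2 ≤ (4-u)*(4-v)) (hw0 : 0 ≤ w) (hw2 : w^2 = u*v) :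
    (1-ρ)^4 ≤ (1-a^2)^2 - a*(1+a^2)*p + a^2*(8-u-v) := by
  have hS : 0 ≤ 4*u+4*v-2*u*v := by nlinarith
  have hkey : 0 ≤ (4*u+4*v-2*u*v)^2 - 4*p^2*w^2 := by
    nlinarith [mul_nonneg hu hv, sq_nonneg ((4-u)*v - (4-v)*u),
      mul_le_mul_of_nonneg_right hp2 (mul_nonneg hu hv)]
  have h2pw : 2*p*w ≤ 4*u+4*v-2*u*v := by
    nlinarith [sq_nonneg (2*p*w - (4*u+4*v-2*u*v))]
  have h2pw' : -(2*p*w) ≤ 4*u+4*v-2*u*v := by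
    nlinarith [sq_nonneg (2*p*w + (4*u+4*v-2*u*v))]
  have hc1 : |(p+w)/4| ≤ 1 := by
    rw [abs_div, abs_of_nonneg (by norm_num : (0:ℝ) ≤ 4), div_le_one (by norm_num)]
    have : (p+w)^2 ≤ 16 := by nlinarith
    nlinarith [sq_abs (p+w), abs_nonneg (p+w)]
  have hc2 : |(p-w)/4| ≤ 1 := by
    rw [abs_div, abs_of_nonneg (by norm_num : (0:ℝ) ≤ 4), div_le_one (by norm_num)]
    have : (p-w)^2 ≤ 16 := by nlinarith
    nlinarith [sq_abs (p-w), abs_nonneg (p-w)]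
  have hf1 := quadA_lower haρ hρ hc1
  have hf2 := quadA_lower haρ hρ hc2
  have hρ0 : (0:ℝ) ≤ (1-ρ)^2 := sq_nonneg _
  have hprod := mul_le_mul hf1 hf2 hρ0 (le_trans hρ0 hf1)
  have hfact : (1 - 2*a*((p+w)/4) + a^2) * (1 - 2*a*((p-w)/4) + a^2)
      = (1-a^2)^2 - a*(1+a^2)*p + a^2*(8-u-v) - a^2*((4-u)*(4-v) - p^2)/4 := by
    linear_combination (-(a^2)/4) * hw2
  have hnn : 0 ≤ a^2*((4-u)*(4-v) - p^2)/4 :=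
    div_nonneg (mul_nonneg (sq_nonneg a) (by linarith)) (by norm_num)
  have h4 : (1-ρ)^4 = (1-ρ)^2*(1-ρ)^2 := by ring
  rw [h4]
  linarith [hprod, hfact]

lemma phiA_lower {q a ρ x y : ℝ} (hq : q ≤ 1) (haρ : |a| ≤ ρ) (hρ : ρ < 1)
    (hx : (1-q)*x^2 ≤ 4) (hy : (1-q)*y^2 ≤ 4) :
    (1-ρ)^4 ≤ phiA q a x y := by
  have h1q : (0:ℝ) ≤ 1 - q := by linarith
  have hx0 : (0:ℝ) ≤ (1-q)*x^2 := mul_nonneg h1q (sq_nonneg x)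
  have hy0 : (0:ℝ) ≤ (1-q)*y^2 := mul_nonneg h1q (sq_nonneg y)
  have huv : (0:ℝ) ≤ (4 - (1-q)*x^2) * (4 - (1-q)*y^2) :=
    mul_nonneg (by linarith) (by linarith)
  have key := phiA_lower' (u := 4 - (1-q)*x^2) (v := 4 - (1-q)*y^2)
    (p := (1-q)*x*y) (w := Real.sqrt ((4 - (1-q)*x^2) * (4 - (1-q)*y^2)))
    haρ hρ (by linarith) (by linarith)
    (by linarith) (by linarith)
    (le_of_eq (by ring)) (Real.sqrt_nonneg _)
    (Real.sq_sqrt huv)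
  have : phiA q a x y = (1-a^2)^2 - a*(1+a^2)*((1-q)*x*y)
      + a^2*(8 - (4 - (1-q)*x^2) - (4 - (1-q)*y^2)) := by
    unfold phiA; ring
  rw [this]
  convert key using 2

lemma phiA_sub_one {q a x y : ℝ} (hq : q ≤ 1) (ha : |a| ≤ 1)
    (hx : (1-q)*x^2 ≤ 4) (hy : (1-q)*y^2 ≤ 4) :
    |phiA q a x y - 1| ≤ 19 * |a| := by
  have h1q : (0:ℝ) ≤ 1 - q := by linarith
  have hxy : |(1-q)*x*y| ≤ 4 := by
    rw [abs_le]
    constructor <;> nlinarith [sq_nonneg (x+y), sq_nonneg (x-y),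
      mul_nonneg h1q (sq_nonneg (x+y)), mul_nonneg h1q (sq_nonneg (x-y))]
  have ha2 : a^2 ≤ |a| := by nlinarith [sq_abs a, abs_nonneg a]
  have ha4 : a^2*a^2 ≤ |a| := by nlinarith [sq_abs a, abs_nonneg a, sq_nonneg a]
  have h2 : |(1-q)*a*(1+a^2)*x*y| ≤ 8*|a| := by
    have : (1-q)*a*(1+a^2)*x*y = ((1-q)*x*y) * (a*(1+a^2)) := by ring
    rw [this, abs_mul ((1-q)*x*y) (a*(1+a^2)), abs_mul a (1+a^2)]
    have h3 : |1+a^2| ≤ 2 := by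
      rw [abs_of_nonneg (by positivity)]; nlinarith [sq_abs a, abs_nonneg a]
    have e1 : |(1-q)*x*y| * (|a| * |1+a^2|) ≤ 4*(|a| * |1+a^2|) :=
      mul_le_mul_of_nonneg_right hxy (by positivity)
    have e2 : |a| * |1+a^2| ≤ |a| * 2 := mul_le_mul_of_nonneg_left h3 (abs_nonneg a)
    have e3 : (0:ℝ) ≤ |a| := abs_nonneg a
    linarith
  have h4 : (1-q)*a^2*(x^2+y^2) ≤ 8*|a| := by
    have : (1-q)*a^2*(x^2+y^2) = ((1-q)*x^2 + (1-q)*y^2)*a^2 := by ring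
    rw [this]
    nlinarith [sq_nonneg a, mul_nonneg h1q (sq_nonneg x), mul_nonneg h1q (sq_nonneg y)]
  have h5 : (0:ℝ) ≤ (1-q)*a^2*(x^2+y^2) := by positivity
  have h6 : phiA q a x y - 1 = (-2*a^2 + a^2*a^2) - (1-q)*a*(1+a^2)*x*y
      + (1-q)*a^2*(x^2+y^2) := by
    unfold phiA; ring
  rw [abs_le] at h2 ⊢
  constructor <;> nlinarith [h2.1, h2.2, sq_nonneg a, abs_nonneg a]

lemma q2term_lower {a c r : ℝ} (ha : |a| ≤ r) (hr : r < 1) (hc0 : 0 ≤ c) (hc4 : c ≤ 4) :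
    (1-r)^2 ≤ (1+a)^2 - c*a := by
  rcases le_or_gt 0 a with h | h
  · have : |a| = a := abs_of_nonneg h
    nlinarith [sq_nonneg (1-a)]
  · have : |a| = -a := abs_of_neg h
    nlinarith [sq_nonneg (1+a), mul_nonneg hc0 (neg_nonneg.mpr h.le)]

lemma q2term_sub_one {a c : ℝ} (ha : |a| ≤ 1) (hc0 : 0 ≤ c) (hc4 : c ≤ 4) :
    |((1+a)^2 - c*a) - 1| ≤ 7*|a| := by
  have h1 : (1+a)^2 - c*a - 1 = (2 + a - c)*a := by ring
  rw [h1, abs_mul]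
  have : |2 + a - c| ≤ 7 := by
    rw [abs_le]; have := abs_le.mp ha; constructor <;> [linarith; linarith]
  nlinarith [abs_nonneg a]

lemma tprod_eq_exp_tsum_log (f : ℕ → ℝ) (hf : ∀ n, 0 < f n)
    (hs : Summable fun n => Real.log (f n)) :
    ∏' n, f n = Real.exp (∑' n, Real.log (f n)) := by
  have := Real.rexp_tsum_eq_tprod (f := f) hf hs
  exact this.symm

lemma tendsto_one_sub_exp_div {c : ℝ} :
    Filter.Tendsto (fun ε : ℝ => (1 - Real.exp (-c*ε))/ε)
      (nhdsWithin 0 (Set.Ioi 0)) (nhds c) := by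
  have h1 : HasDerivAt (fun x : ℝ => -c*x) (-c) 0 := by
    simpa using (hasDerivAt_id (0:ℝ)).const_mul (-c)
  have h2 : HasDerivAt (fun x : ℝ => Real.exp (-c*x)) (-c) 0 := by
    simpa using h1.exp
  have h3 : HasDerivAt (fun x : ℝ => 1 - Real.exp (-c*x)) c 0 := by
    simpa using h2.const_sub 1
  have h4 := hasDerivAt_iff_tendsto_slope.mp h3
  have h5 : Filter.Tendsto (slope (fun x : ℝ => 1 - Real.exp (-c*x)) 0)
      (nhdsWithin 0 (Set.Ioi 0)) (nhds c) :=
    h4.mono_left (nhdsWithin_mono 0 (fun z hz => ne_of_gt hz))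
  apply h5.congr'
  filter_upwards [self_mem_nhdsWithin] with ε (hε : 0 < ε)
  rw [slope_def_field]
  simp

lemma tendsto_within_of_continuous {f : ℝ → ℝ} (hf : Continuous f) {y : ℝ} (hy : f 0 = y) :
    Filter.Tendsto f (nhdsWithin 0 (Set.Ioi 0)) (nhds y) := by
  rw [← hy]; exact (hf.tendsto 0).mono_left nhdsWithin_le_nhds

lemma bound4 {q z : ℝ} (h1q : (0:ℝ) < 1-q) (hz : |z| ≤ 2/Real.sqrt (1-q)) :
    (1-q)*z^2 ≤ 4 := by
  have hs : 0 < Real.sqrt (1-q) := Real.sqrt_pos.mpr h1q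
  have h2 : |z| * Real.sqrt (1-q) ≤ 2 := by
    rw [← le_div_iff₀ hs]; exact hz
  have h3 : (|z| * Real.sqrt (1-q))^2 ≤ 4 := by
    nlinarith [mul_nonneg (abs_nonneg z) hs.le]
  calc (1-q)*z^2 = (|z| * Real.sqrt (1-q))^2 := by
        rw [mul_pow, sq_abs, Real.sq_sqrt h1q.le]; ring
  _ ≤ 4 := h3

set_option maxHeartbeats 4000000 in
theorem stmt6 (q : ℝ) (hq : q ∈ Set.Ioo (-1:ℝ) 1) (x : ℝ)
    (hx : |x| < 2 / Real.sqrt (1-q)) (t₁ t₂ : ℝ) (ht₁ : 0 ≤ t₁) (ht : t₁ < t₂)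
    (y₁ y₂ : ℝ) :
    Filter.Tendsto
      (fun ε : ℝ => ε * pOU q (ε*t₁) (ε*t₂) (x + y₁*ε) (x + y₂*ε))
      (nhdsWithin 0 (Set.Ioi 0))
      (nhds ((t₂-t₁) * Real.sqrt (1-q) * Real.sqrt (4 - (1-q)*x^2)
        / (Real.pi * ((1-q)*(y₂-y₁)^2 + (t₂-t₁)^2 * (4 - (1-q)*x^2))))) ∧
    (t₂-t₁) * Real.sqrt (1-q) * Real.sqrt (4 - (1-q)*x^2)
        / (Real.pi * ((1-q)*(y₂-y₁)^2 + (t₂-t₁)^2 * (4 - (1-q)*x^2)))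
      = fCauchy t₁ t₂ (y₁ / Real.sqrt (4/(1-q) - x^2)) (y₂ / Real.sqrt (4/(1-q) - x^2))
          / Real.sqrt (4/(1-q) - x^2) := by
  obtain ⟨hq1, hq2⟩ := hq
  have h1q : (0:ℝ) < 1 - q := by linarith
  have hr0 : (0:ℝ) ≤ |q| := abs_nonneg q
  have hr1 : |q| < 1 := abs_lt.mpr ⟨hq1, hq2⟩
  have hδ : (0:ℝ) < t₂ - t₁ := sub_pos.mpr ht
  have hsq : 0 < Real.sqrt (1-q) := Real.sqrt_pos.mpr h1q
  have hx4 : (1-q)*x^2 < 4 := by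
    have h2 : |x| * Real.sqrt (1-q) < 2 := by rw [← lt_div_iff₀ hsq]; exact hx
    have h3 : (|x| * Real.sqrt (1-q))^2 < 4 := by
      nlinarith [mul_nonneg (abs_nonneg x) hsq.le]
    calc (1-q)*x^2 = (|x| * Real.sqrt (1-q))^2 := by
          rw [mul_pow, sq_abs, Real.sq_sqrt h1q.le]; ring
    _ < 4 := h3
  have hD : 0 < (1-q)*(y₂-y₁)^2 + (t₂-t₁)^2 * (4 - (1-q)*x^2) := by
    have : 0 < (t₂-t₁)^2 * (4 - (1-q)*x^2) := mul_pos (pow_pos hδ 2) (by linarith)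
    nlinarith [mul_nonneg h1q.le (sq_nonneg (y₂-y₁))]
  constructor
  ·
    -- N selection
    obtain ⟨N, hN⟩ : ∃ N : ℕ, 19 * |q|^(N+1) ≤ 1/2 := by
      obtain ⟨n, hn⟩ := exists_pow_lt_of_lt_one (show (0:ℝ) < 1/38 by norm_num) hr1
      refine ⟨n, ?_⟩
      have h1 : |q|^(n+1) ≤ |q|^n := pow_le_pow_of_le_one hr0 hr1.le (Nat.le_succ n)
      nlinarith
    have hM4 : (1-q)*x^2 ≤ 4 := hx4.le
    -- the master pointwise bounds
    have hMain : ∀ d u v : ℝ, 0 ≤ d → |u| ≤ 2/Real.sqrt (1-q) → |v| ≤ 2/Real.sqrt (1-q) →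
        ∀ k : ℕ,
        ((1-|q|)^4 ≤ 1 - Real.exp (-2*d) * q^(k+1)
          ∧ |Real.log (1 - Real.exp (-2*d) * q^(k+1))| ≤ boundFn |q| N k)
        ∧ ((1-|q|)^4 ≤ phiQ q (k+1) d u v
          ∧ |Real.log (phiQ q (k+1) d u v)| ≤ boundFn |q| N k)
        ∧ ((1-|q|)^4 ≤ (1+q^(k+1))^2 - (1-q)*v^2*q^(k+1)
          ∧ |Real.log ((1+q^(k+1))^2 - (1-q)*v^2*q^(k+1))| ≤ boundFn |q| N k) := by
      intro d u v hd hu hv k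
      have hu4 : (1-q)*u^2 ≤ 4 := bound4 h1q hu
      have hv4 : (1-q)*v^2 ≤ 4 := bound4 h1q hv
      have hE0 : 0 < Real.exp (-2*d) := Real.exp_pos _
      have hE1 : Real.exp (-2*d) ≤ 1 := Real.exp_le_one_iff.mpr (by linarith)
      have he0 : 0 < Real.exp (-d) := Real.exp_pos _
      have he1 : Real.exp (-d) ≤ 1 := Real.exp_le_one_iff.mpr (by linarith)
      have hqk1 : |q|^(k+1) ≤ |q| := pow_le_of_le_one hr0 hr1.le (Nat.succ_ne_zero k)
      have hqk0 : (0:ℝ) ≤ |q|^(k+1) := pow_nonneg hr0 _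
      have hqkk : |q|^(k+1) ≤ 1 := pow_le_one₀ hr0 hr1.le
      have hr14 : (1-|q|)^4 ≤ 1-|q| :=
        pow_le_of_le_one (by linarith) (by linarith) (by norm_num)
      have hr12 : (1-|q|)^4 ≤ (1-|q|)^2 :=
        pow_le_pow_of_le_one (by linarith) (by linarith) (by norm_num)
      refine ⟨⟨?_, ?_⟩, ⟨?_, ?_⟩, ⟨?_, ?_⟩⟩
      · have h1 : |Real.exp (-2*d) * q^(k+1)| ≤ |q|^(k+1) := by
          rw [abs_mul, abs_pow, abs_of_pos hE0]
          nlinarith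
        have h2 := le_abs_self (Real.exp (-2*d) * q^(k+1))
        have h3 := abs_nonneg (Real.exp (-2*d) * q^(k+1))
        linarith
      · apply key_bound hr0 hr1 hN
        · have h1 : |Real.exp (-2*d) * q^(k+1)| ≤ |q|^(k+1) := by
            rw [abs_mul, abs_pow, abs_of_pos hE0]
            nlinarith
          have h2 := le_abs_self (Real.exp (-2*d) * q^(k+1))
          linarith
        · have h1 : |Real.exp (-2*d) * q^(k+1)| ≤ |q|^(k+1) := by
            rw [abs_mul, abs_pow, abs_of_pos hE0]
            nlinarith
          nlinarith
      · rw [phiQ_eq_phiA]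
        apply phiA_lower hq2.le _ hr1 hu4 hv4
        rw [abs_mul, abs_pow, abs_of_pos he0]
        nlinarith
      · have ha : |Real.exp (-d) * q^(k+1)| ≤ |q|^(k+1) := by
          rw [abs_mul, abs_pow, abs_of_pos he0]
          nlinarith
        have hlow : (1-|q|)^4 ≤ phiQ q (k+1) d u v := by
          rw [phiQ_eq_phiA]
          apply phiA_lower hq2.le _ hr1 hu4 hv4
          linarith
        have hsub : |phiQ q (k+1) d u v - 1| ≤ 19 * |q|^(k+1) := by
          rw [phiQ_eq_phiA]
          have := phiA_sub_one (a := Real.exp (-d) * q^(k+1)) (x := u) (y := v)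
            hq2.le (by linarith) hu4 hv4
          nlinarith [abs_nonneg (Real.exp (-d) * q^(k+1))]
        have := key_bound hr0 hr1 hN (u := 1 - phiQ q (k+1) d u v)
          (by linarith) (by rw [abs_sub_comm] at hsub; simpa using hsub)
        simpa using this
      · have ha : |q^(k+1)| ≤ |q| := by rw [abs_pow]; exact hqk1
        have := q2term_lower (a := q^(k+1)) (c := (1-q)*v^2) ha hr1
          (mul_nonneg h1q.le (sq_nonneg v)) hv4
        linarith
      · have ha : |q^(k+1)| ≤ 1 := by rw [abs_pow]; exact hqkk
        have hsub := q2term_sub_one (a := q^(k+1)) (c := (1-q)*v^2) ha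
          (mul_nonneg h1q.le (sq_nonneg v)) hv4
        have ha2 : |q^(k+1)| = |q|^(k+1) := abs_pow q (k+1)
        have hlow : (1-|q|)^4 ≤ (1+q^(k+1))^2 - (1-q)*v^2*q^(k+1) := by
          have := q2term_lower (a := q^(k+1)) (c := (1-q)*v^2) (by rw [abs_pow]; exact hqk1)
            hr1 (mul_nonneg h1q.le (sq_nonneg v)) hv4
          linarith
        have := key_bound hr0 hr1 hN (u := 1 - ((1+q^(k+1))^2 - (1-q)*v^2*q^(k+1)))
          (by linarith) (by rw [abs_sub_comm, ← ha2] at *; nlinarith [abs_nonneg (q^(k+1))])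
        simpa using this
    -- region
    have hMx : 0 < 2/Real.sqrt (1-q) - |x| := sub_pos.mpr hx
    have hyden : (0:ℝ) < 1+|y₁|+|y₂| := by positivity
    set ε₀ : ℝ := min 1 ((2/Real.sqrt (1-q) - |x|)/(1+|y₁|+|y₂|)) with hε₀def
    have hε₀ : 0 < ε₀ := lt_min one_pos (div_pos hMx hyden)
    have hreg : ∀ ε ∈ Set.Ioo (0:ℝ) ε₀,
        |x + y₁*ε| ≤ 2/Real.sqrt (1-q) ∧ |x + y₂*ε| ≤ 2/Real.sqrt (1-q) := by
      rintro ε ⟨he1, he2⟩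
      have h3 : ε ≤ (2/Real.sqrt (1-q) - |x|)/(1+|y₁|+|y₂|) :=
        le_trans he2.le (min_le_right _ _)
      have h4 : ε * (1+|y₁|+|y₂|) ≤ 2/Real.sqrt (1-q) - |x| := by
        rw [← le_div_iff₀ hyden]; exact h3
      constructor
      · calc |x + y₁*ε| ≤ |x| + |y₁| * ε := by
              have h5 := abs_add_le x (y₁*ε)
              rw [abs_mul, abs_of_pos he1] at h5; linarith
        _ ≤ 2/Real.sqrt (1-q) := by nlinarith [abs_nonneg y₁, abs_nonneg y₂, he1.le]
      · calc |x + y₂*ε| ≤ |x| + |y₂| * ε := by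
              have h5 := abs_add_le x (y₂*ε)
              rw [abs_mul, abs_of_pos he1] at h5; linarith
        _ ≤ 2/Real.sqrt (1-q) := by nlinarith [abs_nonneg y₁, abs_nonneg y₂, he1.le]
    have hIoo : Set.Ioo (0:ℝ) ε₀ ∈ nhdsWithin (0:ℝ) (Set.Ioi 0) :=
      Ioo_mem_nhdsGT_of_mem ⟨le_refl 0, hε₀⟩
    have hsumB : Summable (boundFn |q| N) := summable_boundFn hr0 hr1 N
    -- limit-config facts
    have hLim : ∀ k : ℕ,
        ((1-|q|)^4 ≤ 1 - q^(k+1) ∧ |Real.log (1 - q^(k+1))| ≤ boundFn |q| N k)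
        ∧ ((1-|q|)^4 ≤ phiQ q (k+1) 0 x x
          ∧ |Real.log (phiQ q (k+1) 0 x x)| ≤ boundFn |q| N k)
        ∧ ((1-|q|)^4 ≤ (1+q^(k+1))^2 - (1-q)*x^2*q^(k+1)
          ∧ |Real.log ((1+q^(k+1))^2 - (1-q)*x^2*q^(k+1))| ≤ boundFn |q| N k) := by
      intro k
      have := hMain 0 x x le_rfl hx.le hx.le k
      have h0 : Real.exp (-2*(0:ℝ)) = 1 := by norm_num
      rw [h0, one_mul] at this
      exact this
    have hpow4 : (0:ℝ) < (1-|q|)^4 := pow_pos (by linarith) 4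
    -- Summability at limit config
    have hsumc : Summable (fun k : ℕ => Real.log (1 - q^(k+1))) :=
      hsumB.of_norm_bounded (fun k => by
        rw [Real.norm_eq_abs]; exact (hLim k).1.2)
    have hsum2₀ : Summable (fun k : ℕ => Real.log (phiQ q (k+1) 0 x x)) :=
      hsumB.of_norm_bounded (fun k => by
        rw [Real.norm_eq_abs]; exact (hLim k).2.1.2)
    have hsum3₀ : Summable (fun k : ℕ => Real.log ((1+q^(k+1))^2 - (1-q)*x^2*q^(k+1))) :=
      hsumB.of_norm_bounded (fun k => by
        rw [Real.norm_eq_abs]; exact (hLim k).2.2.2)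
    -- split identity at limit config
    have hsplit : ∀ k : ℕ, Real.log (phiQ q (k+1) 0 x x)
        = 2*Real.log (1 - q^(k+1)) + Real.log ((1+q^(k+1))^2 - (1-q)*x^2*q^(k+1)) := by
      intro k
      have hfac : phiQ q (k+1) 0 x x
          = (1 - q^(k+1))^2 * ((1+q^(k+1))^2 - (1-q)*x^2*q^(k+1)) := by
        rw [phiQ_eq_phiA]
        have h0 : Real.exp (-(0:ℝ)) = 1 := by norm_num
        rw [h0, one_mul]
        unfold phiA; ring
      have h1 : (0:ℝ) < 1 - q^(k+1) := lt_of_lt_of_le hpow4 (hLim k).1.1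
      have h2 : (0:ℝ) < (1+q^(k+1))^2 - (1-q)*x^2*q^(k+1) :=
        lt_of_lt_of_le hpow4 (hLim k).2.2.1
      rw [hfac, Real.log_mul (by positivity) (ne_of_gt h2), Real.log_pow]
      push_cast; ring
    have hS2val : (∑' k : ℕ, Real.log (phiQ q (k+1) 0 x x))
        = 2*(∑' k : ℕ, Real.log (1 - q^(k+1)))
          + (∑' k : ℕ, Real.log ((1+q^(k+1))^2 - (1-q)*x^2*q^(k+1))) := by
      rw [tsum_congr hsplit, (hsumc.mul_left 2).tsum_add hsum3₀, tsum_mul_left]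
    -- Tannery: three instances
    have TS1 : Filter.Tendsto
        (fun ε : ℝ => ∑' k : ℕ, Real.log (1 - Real.exp (-2*(ε*t₂-ε*t₁)) * q^(k+1)))
        (nhdsWithin 0 (Set.Ioi 0)) (nhds (∑' k : ℕ, Real.log (1 - q^(k+1)))) := by
      apply tendsto_tsum_of_dominated_convergence hsumB
      · intro k
        have hc : Continuous (fun ε : ℝ => 1 - Real.exp (-2*(ε*t₂-ε*t₁)) * q^(k+1)) := by
          fun_prop
        have hb : Filter.Tendsto (fun ε : ℝ => 1 - Real.exp (-2*(ε*t₂-ε*t₁)) * q^(k+1))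
            (nhdsWithin 0 (Set.Ioi 0)) (nhds (1 - q^(k+1))) := by
          apply tendsto_within_of_continuous hc; norm_num
        exact hb.log (by
          have h1 : (0:ℝ) < 1 - q^(k+1) := lt_of_lt_of_le hpow4 (hLim k).1.1
          exact ne_of_gt h1)
      · filter_upwards [hIoo] with ε hε k
        rw [Real.norm_eq_abs]
        have hd : (0:ℝ) ≤ ε*t₂-ε*t₁ := by nlinarith [hε.1.le]
        exact ((hMain _ _ _ hd (hreg ε hε).1 (hreg ε hε).2 k).1).2
    have TS2 : Filter.Tendsto
        (fun ε : ℝ => ∑' k : ℕ, Real.log (phiQ q (k+1) (ε*t₂-ε*t₁) (x+y₁*ε) (x+y₂*ε)))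
        (nhdsWithin 0 (Set.Ioi 0)) (nhds (∑' k : ℕ, Real.log (phiQ q (k+1) 0 x x))) := by
      apply tendsto_tsum_of_dominated_convergence hsumB
      · intro k
        have hc : Continuous (fun ε : ℝ => phiQ q (k+1) (ε*t₂-ε*t₁) (x+y₁*ε) (x+y₂*ε)) := by
          unfold phiQ; fun_prop
        have hb : Filter.Tendsto (fun ε : ℝ => phiQ q (k+1) (ε*t₂-ε*t₁) (x+y₁*ε) (x+y₂*ε))
            (nhdsWithin 0 (Set.Ioi 0)) (nhds (phiQ q (k+1) 0 x x)) := by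
          apply tendsto_within_of_continuous hc; norm_num
        exact hb.log (ne_of_gt (lt_of_lt_of_le hpow4 (hLim k).2.1.1))
      · filter_upwards [hIoo] with ε hε k
        rw [Real.norm_eq_abs]
        have hd : (0:ℝ) ≤ ε*t₂-ε*t₁ := by nlinarith [hε.1.le]
        exact ((hMain _ _ _ hd (hreg ε hε).1 (hreg ε hε).2 k).2.1).2
    have TS3 : Filter.Tendsto
        (fun ε : ℝ => ∑' k : ℕ, Real.log ((1+q^(k+1))^2 - (1-q)*(x+y₂*ε)^2*q^(k+1)))
        (nhdsWithin 0 (Set.Ioi 0))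
        (nhds (∑' k : ℕ, Real.log ((1+q^(k+1))^2 - (1-q)*x^2*q^(k+1)))) := by
      apply tendsto_tsum_of_dominated_convergence hsumB
      · intro k
        have hc : Continuous (fun ε : ℝ => (1+q^(k+1))^2 - (1-q)*(x+y₂*ε)^2*q^(k+1)) := by
          fun_prop
        have hb : Filter.Tendsto (fun ε : ℝ => (1+q^(k+1))^2 - (1-q)*(x+y₂*ε)^2*q^(k+1))
            (nhdsWithin 0 (Set.Ioi 0)) (nhds ((1+q^(k+1))^2 - (1-q)*x^2*q^(k+1))) := by
          apply tendsto_within_of_continuous hc; norm_num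
        exact hb.log (ne_of_gt (lt_of_lt_of_le hpow4 (hLim k).2.2.1))
      · filter_upwards [hIoo] with ε hε k
        rw [Real.norm_eq_abs]
        have hd : (0:ℝ) ≤ ε*t₂-ε*t₁ := by nlinarith [hε.1.le]
        exact ((hMain _ _ _ hd (hreg ε hε).1 (hreg ε hε).2 k).2.2).2
    -- exponential factor tends to 1
    have TE : Filter.Tendsto (fun ε : ℝ => Real.exp
        ((∑' k : ℕ, Real.log (1 - Real.exp (-2*(ε*t₂-ε*t₁)) * q^(k+1)))
          - (∑' k : ℕ, Real.log (phiQ q (k+1) (ε*t₂-ε*t₁) (x+y₁*ε) (x+y₂*ε)))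
          + (∑' k : ℕ, Real.log ((1+q^(k+1))^2 - (1-q)*(x+y₂*ε)^2*q^(k+1)))
          + (∑' k : ℕ, Real.log (1 - q^(k+1)))))
        (nhdsWithin 0 (Set.Ioi 0)) (nhds 1) := by
      have h := ((TS1.sub TS2).add TS3).add
        (tendsto_const_nhds (x := ∑' k : ℕ, Real.log (1 - q^(k+1))))
      have hzero : (∑' k : ℕ, Real.log (1 - q^(k+1)))
          - (∑' k : ℕ, Real.log (phiQ q (k+1) 0 x x))
          + (∑' k : ℕ, Real.log ((1+q^(k+1))^2 - (1-q)*x^2*q^(k+1)))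
          + (∑' k : ℕ, Real.log (1 - q^(k+1))) = 0 := by
        rw [hS2val]; ring
      rw [hzero] at h
      have := (Real.continuous_exp.tendsto 0).comp h
      simpa [Function.comp_def] using this
    -- sqrt factor
    have TY : Filter.Tendsto (fun ε : ℝ => Real.sqrt (4 - (1-q)*(x+y₂*ε)^2))
        (nhdsWithin 0 (Set.Ioi 0)) (nhds (Real.sqrt (4 - (1-q)*x^2))) := by
      have hc : Continuous (fun ε : ℝ => Real.sqrt (4 - (1-q)*(x+y₂*ε)^2)) := by
        fun_prop
      apply tendsto_within_of_continuous hc; norm_num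
    -- main prefactor limit
    have TA : Filter.Tendsto (fun ε : ℝ =>
        ε * (1 - Real.exp (-2*(ε*t₂-ε*t₁)))
          / phiQ q 0 (ε*t₂-ε*t₁) (x+y₁*ε) (x+y₂*ε))
        (nhdsWithin 0 (Set.Ioi 0))
        (nhds (2*(t₂-t₁) / ((1-q)*(y₂-y₁)^2 + (t₂-t₁)^2 * (4 - (1-q)*x^2)))) := by
      have TN2 : Filter.Tendsto (fun ε : ℝ => (1 - Real.exp (-(2*(t₂-t₁))*ε))/ε)
          (nhdsWithin 0 (Set.Ioi 0)) (nhds (2*(t₂-t₁))) := tendsto_one_sub_exp_div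
      have TN1 : Filter.Tendsto (fun ε : ℝ => (1 - Real.exp (-(t₂-t₁)*ε))/ε)
          (nhdsWithin 0 (Set.Ioi 0)) (nhds (t₂-t₁)) := tendsto_one_sub_exp_div
      have Te : Filter.Tendsto (fun ε : ℝ => Real.exp (-(t₂-t₁)*ε))
          (nhdsWithin 0 (Set.Ioi 0)) (nhds 1) := by
        have hc : Continuous (fun ε : ℝ => Real.exp (-(t₂-t₁)*ε)) := by fun_prop
        apply tendsto_within_of_continuous hc; norm_num
      have Txy : Filter.Tendsto (fun ε : ℝ => (x+y₁*ε)*(x+y₂*ε))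
          (nhdsWithin 0 (Set.Ioi 0)) (nhds (x*x)) := by
        have hc : Continuous (fun ε : ℝ => (x+y₁*ε)*(x+y₂*ε)) := by fun_prop
        apply tendsto_within_of_continuous hc; norm_num
      have TDq : Filter.Tendsto (fun ε : ℝ =>
          ((1 - Real.exp (-(2*(t₂-t₁))*ε))/ε)^2
            + (1-q)*Real.exp (-(t₂-t₁)*ε)*(Real.exp (-(t₂-t₁)*ε)*(y₁-y₂)^2
              - ((1 - Real.exp (-(t₂-t₁)*ε))/ε)^2*((x+y₁*ε)*(x+y₂*ε))))
          (nhdsWithin 0 (Set.Ioi 0))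
          (nhds ((2*(t₂-t₁))^2 + (1-q)*1*(1*(y₁-y₂)^2 - (t₂-t₁)^2*(x*x)))) := by
        exact (TN2.pow 2).add (((tendsto_const_nhds (x := 1-q)).mul Te).mul
          ((Te.mul (tendsto_const_nhds (x := (y₁-y₂)^2))).sub ((TN1.pow 2).mul Txy)))
      have hval : (2*(t₂-t₁))^2 + (1-q)*1*(1*(y₁-y₂)^2 - (t₂-t₁)^2*(x*x))
          = (1-q)*(y₂-y₁)^2 + (t₂-t₁)^2 * (4 - (1-q)*x^2) := by ring
      rw [hval] at TDq
      have hTdiv := TN2.div TDq (ne_of_gt hD)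
      apply hTdiv.congr'
      filter_upwards [hIoo] with ε hε
      have hε0 : (0:ℝ) < ε := hε.1
      have hd0 : (0:ℝ) < ε*t₂-ε*t₁ := by nlinarith
      have hu4 : (1-q)*(x+y₁*ε)^2 ≤ 4 := bound4 h1q (hreg ε hε).1
      have hv4 : (1-q)*(x+y₂*ε)^2 ≤ 4 := bound4 h1q (hreg ε hε).2
      have hphi0 : 0 < phiQ q 0 (ε*t₂-ε*t₁) (x+y₁*ε) (x+y₂*ε) := by
        rw [phiQ_eq_phiA]
        have he1 : Real.exp (-(ε*t₂-ε*t₁)) < 1 := by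
          rw [Real.exp_lt_one_iff]; linarith
        have he0 : (0:ℝ) < Real.exp (-(ε*t₂-ε*t₁)) := Real.exp_pos _
        calc (0:ℝ) < (1 - Real.exp (-(ε*t₂-ε*t₁)))^4 := pow_pos (by linarith) 4
        _ ≤ phiA q (Real.exp (-(ε*t₂-ε*t₁)) * q^0) (x+y₁*ε) (x+y₂*ε) := by
            apply phiA_lower hq2.le _ he1 hu4 hv4
            rw [pow_zero, mul_one, abs_of_pos he0]
      have hee : Real.exp (-(2*(t₂-t₁))*ε) = Real.exp (-(t₂-t₁)*ε)^2 := by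
        rw [show (-(2*(t₂-t₁))*ε) = (-(t₂-t₁)*ε) + (-(t₂-t₁)*ε) by ring, Real.exp_add, sq]
      have hee2 : Real.exp (-2*(ε*t₂-ε*t₁)) = Real.exp (-(t₂-t₁)*ε)^2 := by
        rw [show (-2*(ε*t₂-ε*t₁)) = (-(t₂-t₁)*ε) + (-(t₂-t₁)*ε) by ring, Real.exp_add, sq]
      have hphi0eq : phiQ q 0 (ε*t₂-ε*t₁) (x+y₁*ε) (x+y₂*ε)
          = (1 - Real.exp (-(t₂-t₁)*ε)^2)^2
            + (1-q)*Real.exp (-(t₂-t₁)*ε)*(Real.exp (-(t₂-t₁)*ε)*((y₁-y₂)*ε)^2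
              - (1 - Real.exp (-(t₂-t₁)*ε))^2*((x+y₁*ε)*(x+y₂*ε))) := by
        have he3 : Real.exp (-(ε*t₂-ε*t₁)) = Real.exp (-(t₂-t₁)*ε) := by
          congr 1; ring
        unfold phiQ
        simp only [Nat.mul_zero, pow_zero, mul_one]
        rw [hee2, he3]
        ring
      have hphi0' := hphi0
      rw [hphi0eq] at hphi0'
      have hDqeq : ((1 - Real.exp (-(2*(t₂-t₁))*ε))/ε)^2
            + (1-q)*Real.exp (-(t₂-t₁)*ε)*(Real.exp (-(t₂-t₁)*ε)*(y₁-y₂)^2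
              - ((1 - Real.exp (-(t₂-t₁)*ε))/ε)^2*((x+y₁*ε)*(x+y₂*ε)))
          = ((1 - Real.exp (-(t₂-t₁)*ε)^2)^2
            + (1-q)*Real.exp (-(t₂-t₁)*ε)*(Real.exp (-(t₂-t₁)*ε)*((y₁-y₂)*ε)^2
              - (1 - Real.exp (-(t₂-t₁)*ε))^2*((x+y₁*ε)*(x+y₂*ε))))/ε^2 := by
        rw [hee]; field_simp
      show (1 - Real.exp (-(2*(t₂-t₁))*ε))/ε / (((1 - Real.exp (-(2*(t₂-t₁))*ε))/ε)^2
            + (1-q)*Real.exp (-(t₂-t₁)*ε)*(Real.exp (-(t₂-t₁)*ε)*(y₁-y₂)^2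
              - ((1 - Real.exp (-(t₂-t₁)*ε))/ε)^2*((x+y₁*ε)*(x+y₂*ε))))
          = ε * (1 - Real.exp (-2*(ε*t₂-ε*t₁)))
              / phiQ q 0 (ε*t₂-ε*t₁) (x+y₁*ε) (x+y₂*ε)
      rw [hDqeq, hee, hee2, hphi0eq]
      have habs : ∀ (B P e : ℝ), e ≠ 0 → P ≠ 0 → (B/e)/(P/e^2) = e*B/P := by
        intros B P e he hP; field_simp
      exact habs _ _ _ hε0.ne' (ne_of_gt hphi0')
    -- eventual equality with pOU
    have heq : (fun ε : ℝ =>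
        (ε * (1 - Real.exp (-2*(ε*t₂-ε*t₁)))
            / phiQ q 0 (ε*t₂-ε*t₁) (x+y₁*ε) (x+y₂*ε))
          * (Real.sqrt (1-q)/(2*Real.pi))
          * Real.sqrt (4 - (1-q)*(x+y₂*ε)^2)
          * Real.exp
            ((∑' k : ℕ, Real.log (1 - Real.exp (-2*(ε*t₂-ε*t₁)) * q^(k+1)))
              - (∑' k : ℕ, Real.log (phiQ q (k+1) (ε*t₂-ε*t₁) (x+y₁*ε) (x+y₂*ε)))
              + (∑' k : ℕ, Real.log ((1+q^(k+1))^2 - (1-q)*(x+y₂*ε)^2*q^(k+1)))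
              + (∑' k : ℕ, Real.log (1 - q^(k+1)))))
        =ᶠ[nhdsWithin (0:ℝ) (Set.Ioi 0)]
        (fun ε : ℝ => ε * pOU q (ε*t₁) (ε*t₂) (x + y₁*ε) (x + y₂*ε)) := by
      filter_upwards [hIoo] with ε hε
      have hε0 : (0:ℝ) < ε := hε.1
      have hd0 : (0:ℝ) < ε*t₂-ε*t₁ := by nlinarith
      have hu4 : (1-q)*(x+y₁*ε)^2 ≤ 4 := bound4 h1q (hreg ε hε).1
      have hv4 : (1-q)*(x+y₂*ε)^2 ≤ 4 := bound4 h1q (hreg ε hε).2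
      have hKey := hMain (ε*t₂-ε*t₁) (x+y₁*ε) (x+y₂*ε) hd0.le (hreg ε hε).1 (hreg ε hε).2
      have hE1 : Real.exp (-2*(ε*t₂-ε*t₁)) < 1 := by
        rw [Real.exp_lt_one_iff]; linarith
      have hpos1 : ∀ k : ℕ, 0 < 1 - Real.exp (-2*(ε*t₂-ε*t₁)) * q^k := by
        intro k
        cases k with
        | zero => simp only [pow_zero, mul_one]; linarith
        | succ j => exact lt_of_lt_of_le hpow4 (hKey j).1.1
      have hphi0 : 0 < phiQ q 0 (ε*t₂-ε*t₁) (x+y₁*ε) (x+y₂*ε) := by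
        rw [phiQ_eq_phiA]
        have he1 : Real.exp (-(ε*t₂-ε*t₁)) < 1 := by
          rw [Real.exp_lt_one_iff]; linarith
        have he0 : (0:ℝ) < Real.exp (-(ε*t₂-ε*t₁)) := Real.exp_pos _
        calc (0:ℝ) < (1 - Real.exp (-(ε*t₂-ε*t₁)))^4 := pow_pos (by linarith) 4
        _ ≤ phiA q (Real.exp (-(ε*t₂-ε*t₁)) * q^0) (x+y₁*ε) (x+y₂*ε) := by
            apply phiA_lower hq2.le _ he1 hu4 hv4
            rw [pow_zero, mul_one, abs_of_pos he0]
      have hpos2 : ∀ k : ℕ, 0 < phiQ q k (ε*t₂-ε*t₁) (x+y₁*ε) (x+y₂*ε) := by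
        intro k
        cases k with
        | zero => exact hphi0
        | succ j => exact lt_of_lt_of_le hpow4 (hKey j).2.1.1
      have hpos3 : ∀ k : ℕ, 0 < (1+q^(k+1))^2 - (1-q)*(x+y₂*ε)^2*q^(k+1) :=
        fun k => lt_of_lt_of_le hpow4 (hKey k).2.2.1
      have hposc : ∀ k : ℕ, 0 < 1 - q^(k+1) :=
        fun k => lt_of_lt_of_le hpow4 (hLim k).1.1
      have hsum1 : Summable (fun k : ℕ =>
          Real.log (1 - Real.exp (-2*(ε*t₂-ε*t₁)) * q^k)) := by
        apply (summable_nat_add_iff 1).mp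
        apply hsumB.of_norm_bounded
        intro k; rw [Real.norm_eq_abs]; exact (hKey k).1.2
      have hsum2 : Summable (fun k : ℕ =>
          Real.log (phiQ q k (ε*t₂-ε*t₁) (x+y₁*ε) (x+y₂*ε))) := by
        apply (summable_nat_add_iff 1).mp
        apply hsumB.of_norm_bounded
        intro k; rw [Real.norm_eq_abs]; exact (hKey k).2.1.2
      have hsum2s : Summable (fun k : ℕ =>
          Real.log (phiQ q (k+1) (ε*t₂-ε*t₁) (x+y₁*ε) (x+y₂*ε))) :=
        hsumB.of_norm_bounded (fun k => by
          rw [Real.norm_eq_abs]; exact (hKey k).2.1.2)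
      have hsum3 : Summable (fun k : ℕ =>
          Real.log ((1+q^(k+1))^2 - (1-q)*(x+y₂*ε)^2*q^(k+1))) :=
        hsumB.of_norm_bounded (fun k => by
          rw [Real.norm_eq_abs]; exact (hKey k).2.2.2)
      have e1 : (∏' k : ℕ, (1 - Real.exp (-2*(ε*t₂-ε*t₁)) * q^k))
          = (1 - Real.exp (-2*(ε*t₂-ε*t₁)))
            * Real.exp (∑' k : ℕ,
                Real.log (1 - Real.exp (-2*(ε*t₂-ε*t₁)) * q^(k+1))) := by
        rw [tprod_eq_exp_tsum_log _ hpos1 hsum1, hsum1.tsum_eq_zero_add, Real.exp_add]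
        congr 1
        rw [pow_zero, mul_one]
        exact Real.exp_log (by linarith)
      have e2 : (∏' k : ℕ, 1 / phiQ q k (ε*t₂-ε*t₁) (x+y₁*ε) (x+y₂*ε))
          = (phiQ q 0 (ε*t₂-ε*t₁) (x+y₁*ε) (x+y₂*ε))⁻¹
            * Real.exp (-(∑' k : ℕ,
                Real.log (phiQ q (k+1) (ε*t₂-ε*t₁) (x+y₁*ε) (x+y₂*ε)))) := by
        have hlog2 : ∀ k : ℕ,
            Real.log (1 / phiQ q k (ε*t₂-ε*t₁) (x+y₁*ε) (x+y₂*ε))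
            = -(Real.log (phiQ q k (ε*t₂-ε*t₁) (x+y₁*ε) (x+y₂*ε))) := by
          intro k; rw [one_div, Real.log_inv]
        have hsum2n : Summable (fun k : ℕ =>
            Real.log (1 / phiQ q k (ε*t₂-ε*t₁) (x+y₁*ε) (x+y₂*ε))) :=
          (hsum2.neg).congr (fun k => (hlog2 k).symm)
        rw [tprod_eq_exp_tsum_log _ (fun k => one_div_pos.mpr (hpos2 k)) hsum2n]
        rw [tsum_congr hlog2, tsum_neg, hsum2.tsum_eq_zero_add]
        rw [neg_add, Real.exp_add, Real.exp_neg, Real.exp_log (hpos2 0)]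
      have e3 : (∏' k : ℕ, (1 - q^(k+1)))
          = Real.exp (∑' k : ℕ, Real.log (1 - q^(k+1))) :=
        tprod_eq_exp_tsum_log _ hposc hsumc
      have e4 : (∏' k : ℕ, ((1 + q^(k+1))^2 - (1-q)*(x+y₂*ε)^2*q^(k+1)))
          = Real.exp (∑' k : ℕ,
              Real.log ((1+q^(k+1))^2 - (1-q)*(x+y₂*ε)^2*q^(k+1))) :=
        tprod_eq_exp_tsum_log _ hpos3 hsum3
      have hexp : ∀ a b c dd : ℝ, Real.exp (a - b + c + dd)
          = Real.exp a / Real.exp b * Real.exp c * Real.exp dd := by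
        intro a b c dd
        rw [Real.exp_add, Real.exp_add, Real.exp_sub]
      simp only [pOU, pMarg]
      rw [e1, e2, e3, e4, hexp, Real.exp_neg, div_eq_mul_inv]
      ring
    have hbig := ((TA.mul (tendsto_const_nhds
        (x := Real.sqrt (1-q)/(2*Real.pi)))).mul TY).mul TE
    have hVal : (t₂-t₁) * Real.sqrt (1-q) * Real.sqrt (4 - (1-q)*x^2)
        / (Real.pi * ((1-q)*(y₂-y₁)^2 + (t₂-t₁)^2 * (4 - (1-q)*x^2)))
        = 2*(t₂-t₁) / ((1-q)*(y₂-y₁)^2 + (t₂-t₁)^2 * (4 - (1-q)*x^2))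
          * (Real.sqrt (1-q)/(2*Real.pi)) * Real.sqrt (4 - (1-q)*x^2) * 1 := by
      rw [mul_one]
      field_simp
    rw [hVal]
    exact hbig.congr' heq

  · have hc2pos : 0 < 4/(1-q) - x^2 := by
      rw [sub_pos, lt_div_iff₀ h1q]; nlinarith
    set c : ℝ := Real.sqrt (4/(1-q) - x^2) with hc_def
    have hcpos : 0 < c := Real.sqrt_pos.mpr hc2pos
    have hc2 : c^2 = 4/(1-q) - x^2 := Real.sq_sqrt hc2pos.le
    have e : Real.sqrt (1-q) * Real.sqrt (4-(1-q)*x^2) = (1-q)*c := by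
      rw [← Real.sqrt_mul h1q.le]
      have : (1-q)*c = Real.sqrt ((1-q)^2 * (4/(1-q)-x^2)) := by
        rw [Real.sqrt_mul (sq_nonneg _), Real.sqrt_sq h1q.le]
      rw [this]
      congr 1
      field_simp
    rw [fCauchy, mul_assoc, e]
    have hDc : (1-q)*(y₂-y₁)^2 + (t₂-t₁)^2*(4-(1-q)*x^2)
        = (1-q)*((y₂-y₁)^2 + (t₂-t₁)^2*c^2) := by
      rw [hc2]; field_simp
    rw [hDc]
    have h1 : (y₂/c - y₁/c)^2 + (t₂-t₁)^2 = ((y₂-y₁)^2 + (t₂-t₁)^2*c^2)/c^2 := by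
      field_simp
    rw [h1]
    have hpos : 0 < (y₂-y₁)^2 + (t₂-t₁)^2*c^2 := by positivity
    field_simp
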